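/- In the setting of the previous Schrödinger system, the minimizing path measure P* over 𝒫(ν₀,ν_N) of D(P‖𝔐), where 𝔐(x₀,…,x_N) = μ₀(x₀)∏ m_{x_t x_{t+1}}, satisfies: for any Q ∈ 𝒫(ν₀,ν_N) with Supp(Q) ⊆ Supp(𝔐), D(Q‖𝔐) = D(Q‖P*) + D(P*‖𝔐). Consequently P* is the unique minimizer. -/

import Mathlib

open Matrix Finset

lemma myProdTelescope (F : ℕ → ℝ) (hF : ∀ i, F i ≠ 0) (k : ℕ) :
    ∏ i ∈ Finset.range k, (F (i + 1) / F i) = F k / F 0 := by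
  induction k with
  | zero => rw [Finset.prod_range_zero, div_self (hF 0)]
  | succ k ih =>
    rw [Finset.prod_range_succ, ih, div_mul_div_comm, mul_comm (F k) (F (k + 1)),
      mul_div_mul_right _ _ (hF k)]

lemma myFiberSum {X I : Type*} [Fintype X] [Fintype I] [DecidableEq I]
    (ρ : X → ℝ) (c : X → I) (h : I → ℝ) :
    ∑ x, ρ x * h (c x) = ∑ i, (∑ x, if c x = i then ρ x else 0) * h i := by
  have key : ∀ x, ρ x * h (c x) = ∑ i, if c x = i then ρ x * h i else 0 := by
    intro x; rw [Finset.sum_ite_eq (Finset.univ) (c x) (fun i => ρ x * h i)]; simp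
  simp_rw [key]
  rw [Finset.sum_comm]
  congr 1; funext i
  rw [Finset.sum_mul]
  congr 1; funext x
  split <;> simp

lemma myPathSum (n : ℕ) (M : Matrix (Fin n) (Fin n) ℝ) :
    ∀ (N : ℕ) (F G : Fin n → ℝ),
    ∑ x : Fin (N + 1) → Fin n,
      F (x 0) * (∏ t : Fin N, M (x t.castSucc) (x t.succ)) * G (x (Fin.last N))
    = ∑ i, ∑ j, F i * (M ^ N) i j * G j := by
  intro N
  induction N with
  | zero =>
    intro F G
    rw [← Equiv.sum_comp (Equiv.funUnique (Fin 1) (Fin n)).symm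
      (fun x : Fin 1 → Fin n => F (x 0) * (∏ t : Fin 0, M (x t.castSucc) (x t.succ)) * G (x (Fin.last 0)))]
    simp [Matrix.one_apply]
  | succ N ih =>
    intro F G
    rw [← Equiv.sum_comp (Fin.consEquiv (fun _ : Fin (N + 2) => Fin n))
      (fun x : Fin (N + 2) → Fin n => F (x 0) * (∏ t : Fin (N + 1), M (x t.castSucc) (x t.succ)) * G (x (Fin.last (N + 1))))]
    rw [Fintype.sum_prod_type]
    have key : ∀ (i : Fin n) (y : Fin (N + 1) → Fin n),
        F ((Fin.consEquiv (fun _ : Fin (N + 2) => Fin n)) (i, y) 0) *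
          (∏ t : Fin (N + 1), M ((Fin.consEquiv (fun _ : Fin (N + 2) => Fin n)) (i, y) t.castSucc)
            ((Fin.consEquiv (fun _ : Fin (N + 2) => Fin n)) (i, y) t.succ)) *
          G ((Fin.consEquiv (fun _ : Fin (N + 2) => Fin n)) (i, y) (Fin.last (N + 1)))
        = F i * (M i (y 0) * ∏ t : Fin N, M (y t.castSucc) (y t.succ)) * G (y (Fin.last N)) := by
      intro i y
      simp only [Fin.consEquiv_apply, Fin.cons_zero, Fin.cons_succ, ← Fin.succ_last,
        Fin.prod_univ_succ, Fin.castSucc_zero, ← Fin.succ_castSucc]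
    simp_rw [key]
    have step : ∀ i : Fin n, ∑ y : Fin (N + 1) → Fin n,
        F i * (M i (y 0) * ∏ t : Fin N, M (y t.castSucc) (y t.succ)) * G (y (Fin.last N))
        = ∑ j, ∑ k, (F i * M i j) * (M ^ N) j k * G k := by
      intro i
      rw [← ih (fun j => F i * M i j) G]
      apply Finset.sum_congr rfl
      intro y _
      ring
    simp_rw [step]
    apply Finset.sum_congr rfl
    intro i _
    rw [Finset.sum_comm]
    apply Finset.sum_congr rfl
    intro k _
    rw [pow_succ', Matrix.mul_apply, Finset.mul_sum, Finset.sum_mul]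
    apply Finset.sum_congr rfl
    intro j _
    ring

lemma myChainForward (n N : ℕ) (M : Matrix (Fin n) (Fin n) ℝ)
    (φ : Fin (N + 1) → Fin n → ℝ)
    (hrec : ∀ t : Fin N, ∀ i, φ t.castSucc i = ∑ j, M i j * φ t.succ j) :
    ∀ a, a ≤ N → ∀ i, φ ⟨N - a, Nat.lt_succ_of_le (Nat.sub_le N a)⟩ i
      = ∑ j, (M ^ a) i j * φ (Fin.last N) j := by
  intro a
  induction a with
  | zero =>
    intro _ i
    have : (⟨N - 0, Nat.lt_succ_of_le (Nat.sub_le N 0)⟩ : Fin (N + 1)) = Fin.last N := by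
      apply Fin.ext; simp [Fin.last]
    rw [this]
    simp [Matrix.one_apply]
  | succ a ih =>
    intro h i
    set t : Fin N := ⟨N - (a + 1), by omega⟩ with ht
    have h1 : (⟨N - (a + 1), Nat.lt_succ_of_le (Nat.sub_le N (a + 1))⟩ : Fin (N + 1)) = t.castSucc := by
      apply Fin.ext; simp [ht]
    have h2 : t.succ = (⟨N - a, Nat.lt_succ_of_le (Nat.sub_le N a)⟩ : Fin (N + 1)) := by
      apply Fin.ext; simp [ht]; omega
    rw [h1, hrec t i]
    have h3 : ∀ j, φ t.succ j = ∑ k, (M ^ a) j k * φ (Fin.last N) k := by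
      intro j; rw [h2]; exact ih (by omega) j
    simp_rw [h3, Finset.mul_sum]
    rw [Finset.sum_comm]
    apply Finset.sum_congr rfl
    intro k _
    rw [pow_succ', Matrix.mul_apply, Finset.sum_mul]
    apply Finset.sum_congr rfl
    intro j _
    ring

lemma myChainBack (n N : ℕ) (M : Matrix (Fin n) (Fin n) ℝ)
    (φh : Fin (N + 1) → Fin n → ℝ)
    (hrech : ∀ t : Fin N, ∀ j, φh t.succ j = ∑ i, M i j * φh t.castSucc i) :
    ∀ a, (h : a ≤ N) → ∀ j, φh ⟨a, Nat.lt_succ_of_le h⟩ j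
      = ∑ i, (M ^ a) i j * φh 0 i := by
  intro a
  induction a with
  | zero =>
    intro h j
    have : (⟨0, Nat.lt_succ_of_le h⟩ : Fin (N + 1)) = 0 := rfl
    rw [this]
    simp [Matrix.one_apply, eq_comm]
  | succ a ih =>
    intro h j
    set t : Fin N := ⟨a, by omega⟩ with ht
    have h1 : (⟨a + 1, Nat.lt_succ_of_le h⟩ : Fin (N + 1)) = t.succ := by
      apply Fin.ext; simp [ht]
    have h2 : t.castSucc = (⟨a, Nat.lt_succ_of_le (le_of_lt (by omega : a < N))⟩ : Fin (N + 1)) := by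
      apply Fin.ext; simp [ht]
    rw [h1, hrech t j]
    have h3 : ∀ i, φh t.castSucc i = ∑ k, (M ^ a) k i * φh 0 k := by
      intro i; rw [h2]; exact ih (by omega) i
    simp_rw [h3, Finset.mul_sum]
    rw [Finset.sum_comm]
    apply Finset.sum_congr rfl
    intro k _
    rw [pow_succ, Matrix.mul_apply, Finset.sum_mul]
    apply Finset.sum_congr rfl
    intro i _
    ring

/-- Relative entropy on a finite type (against a not-necessarily-probability
nonnegative measure), convention `0 log 0 = 0`. -/
noncomputable def relEnt {X : Type*} [Fintype X] (P Q : X → ℝ) : ℝ :=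
  ∑ x, P x * Real.log (P x / Q x)

/-- The Markovian path measure induced by an initial distribution `μ0` and a
transition mechanism `M` on paths of length `N`. -/
noncomputable def pathMeasure (n N : ℕ) (μ0 : Fin n → ℝ)
    (M : Matrix (Fin n) (Fin n) ℝ) : (Fin (N + 1) → Fin n) → ℝ :=
  fun x => μ0 (x 0) * ∏ t : Fin N, M (x t.castSucc) (x t.succ)

/-- The Schrödinger bridge path measure with initial marginal `ν0` and transitions
`π_{ij}(t) = m_{ij} φ(t+1,j)/φ(t,i)`. -/
noncomputable def bridgeMeasure (n N : ℕ) (ν0 : Fin n → ℝ)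
    (M : Matrix (Fin n) (Fin n) ℝ) (φ : Fin (N + 1) → Fin n → ℝ) :
    (Fin (N + 1) → Fin n) → ℝ :=
  fun x => ν0 (x 0) * ∏ t : Fin N,
    (M (x t.castSucc) (x t.succ) * φ t.succ (x t.succ) / φ t.castSucc (x t.castSucc))

/-- Pythagorean identity for the Schrödinger bridge `P*`: for any competitor `Q`
with the same endpoint marginals and support inside that of the prior `𝔐`,
`D(Q‖𝔐) = D(Q‖P*) + D(P*‖𝔐)`; consequently `P*` is the unique minimizer of
`D(·‖𝔐)` over that set. -/
theorem schroedinger_bridge_pythagorean_identity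
    (n N : ℕ) (hn : 1 ≤ n) (hN : 1 ≤ N)
    (M : Matrix (Fin n) (Fin n) ℝ) (hM : ∀ i j, 0 ≤ M i j)
    (hMN : ∀ i j, 0 < (M ^ N) i j)
    (μ0 : Fin n → ℝ) (hμ0 : ∀ i, 0 < μ0 i)
    (ν0 νN : Fin n → ℝ)
    (hν00 : ∀ i, 0 ≤ ν0 i) (hν01 : ∑ i, ν0 i = 1)
    (hνN0 : ∀ j, 0 ≤ νN j) (hνN1 : ∑ j, νN j = 1)
    (φ φh : Fin (N + 1) → Fin n → ℝ)
    (hφpos : ∀ t x, 0 < φ t x) (hφh0 : ∀ t x, 0 ≤ φh t x)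
    (hrec : ∀ t : Fin N, ∀ i, φ t.castSucc i = ∑ j, M i j * φ t.succ j)
    (hrech : ∀ t : Fin N, ∀ j, φh t.succ j = ∑ i, M i j * φh t.castSucc i)
    (hbc0 : ∀ x, φ 0 x * φh 0 x = ν0 x)
    (hbcN : ∀ x, φ (Fin.last N) x * φh (Fin.last N) x = νN x)
    (Q : (Fin (N + 1) → Fin n) → ℝ)
    (hQ0 : ∀ x, 0 ≤ Q x) (hQ1 : ∑ x, Q x = 1)
    (hQm0 : ∀ i, (∑ x, if x 0 = i then Q x else 0) = ν0 i)
    (hQmN : ∀ j, (∑ x, if x (Fin.last N) = j then Q x else 0) = νN j)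
    (hQsupp : ∀ x, Q x ≠ 0 → pathMeasure n N μ0 M x ≠ 0) :
    relEnt Q (pathMeasure n N μ0 M) =
        relEnt Q (bridgeMeasure n N ν0 M φ) +
          relEnt (bridgeMeasure n N ν0 M φ) (pathMeasure n N μ0 M) ∧
      relEnt (bridgeMeasure n N ν0 M φ) (pathMeasure n N μ0 M) ≤
        relEnt Q (pathMeasure n N μ0 M) ∧
      (relEnt Q (pathMeasure n N μ0 M) =
          relEnt (bridgeMeasure n N ν0 M φ) (pathMeasure n N μ0 M) →
        Q = bridgeMeasure n N ν0 M φ) := by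
  classical
  set P : (Fin (N + 1) → Fin n) → ℝ := bridgeMeasure n N ν0 M φ with hPdef
  set m : (Fin (N + 1) → Fin n) → ℝ := pathMeasure n N μ0 M with hmdef
  have hPr0 : ∀ x : Fin (N + 1) → Fin n,
      0 ≤ ∏ t : Fin N, M (x t.castSucc) (x t.succ) :=
    fun x => Finset.prod_nonneg (fun t _ => hM _ _)
  have hmx : ∀ x, m x = μ0 (x 0) * ∏ t : Fin N, M (x t.castSucc) (x t.succ) :=
    fun x => rfl
  -- factorization of the bridge measure
  have hfact : ∀ x, P x = ν0 (x 0) / φ 0 (x 0) *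
      ((∏ t : Fin N, M (x t.castSucc) (x t.succ)) * φ (Fin.last N) (x (Fin.last N))) := by
    intro x
    show ν0 (x 0) * ∏ t : Fin N,
        (M (x t.castSucc) (x t.succ) * φ t.succ (x t.succ) / φ t.castSucc (x t.castSucc)) = _
    set F : ℕ → ℝ := fun k => if hk : k < N + 1 then φ ⟨k, hk⟩ (x ⟨k, hk⟩) else 1 with hFdef
    have hFne : ∀ k, F k ≠ 0 := by
      intro k; rw [hFdef]; dsimp only; split
      · exact ne_of_gt (hφpos _ _)
      · exact one_ne_zero
    have e1 : ∀ t : Fin N,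
        M (x t.castSucc) (x t.succ) * φ t.succ (x t.succ) / φ t.castSucc (x t.castSucc)
        = M (x t.castSucc) (x t.succ) * (F (t.1 + 1) / F t.1) := by
      intro t
      have ha : t.1 + 1 < N + 1 := by omega
      have hb : t.1 < N + 1 := by omega
      rw [hFdef]; dsimp only
      have hs : t.succ = (⟨t.1 + 1, ha⟩ : Fin (N + 1)) := by apply Fin.ext; simp
      have hc : t.castSucc = (⟨t.1, hb⟩ : Fin (N + 1)) := by apply Fin.ext; simp
      rw [dif_pos ha, dif_pos hb, mul_div_assoc, hs, hc]
    rw [Finset.prod_congr rfl (fun t _ => e1 t), Finset.prod_mul_distrib]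
    have e2 : ∏ t : Fin N, (F (t.1 + 1) / F t.1) = F N / F 0 := by
      rw [Fin.prod_univ_eq_prod_range (fun k => F (k + 1) / F k) N]
      exact myProdTelescope F hFne N
    have e3 : F N = φ (Fin.last N) (x (Fin.last N)) := by
      rw [hFdef]; dsimp only; rw [dif_pos (by omega : N < N + 1)]; rfl
    have e4 : F 0 = φ 0 (x 0) := by
      rw [hFdef]; dsimp only; rw [dif_pos (by omega : 0 < N + 1)]; rfl
    rw [e2, e3, e4]
    field_simp
  -- marginals of P
  have hφ0ne : ∀ i, φ 0 i ≠ 0 := fun i => ne_of_gt (hφpos _ _)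
  have hchainF : ∀ i, ∑ j, (M ^ N) i j * φ (Fin.last N) j = φ 0 i := by
    intro i
    have h := myChainForward n N M φ hrec N le_rfl i
    have hz : (⟨N - N, Nat.lt_succ_of_le (Nat.sub_le N N)⟩ : Fin (N + 1)) = 0 := by
      apply Fin.ext; simp
    rw [hz] at h
    exact h.symm
  have hchainB : ∀ j, ∑ i, (M ^ N) i j * φh 0 i = φh (Fin.last N) j := by
    intro j
    have h := myChainBack n N M φh hrech N le_rfl j
    have hz : (⟨N, Nat.lt_succ_of_le le_rfl⟩ : Fin (N + 1)) = Fin.last N := rfl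
    rw [hz] at h
    exact h.symm
  have hφh0eq : ∀ i, φh 0 i = ν0 i / φ 0 i := by
    intro i
    rw [eq_div_iff (hφ0ne i), mul_comm, hbc0]
  have hPm0 : ∀ i, (∑ x, if x 0 = i then P x else 0) = ν0 i := by
    intro i
    have e : ∀ x : Fin (N + 1) → Fin n, (if x 0 = i then P x else 0)
        = (if x 0 = i then ν0 (x 0) / φ 0 (x 0) else 0)
          * (∏ t : Fin N, M (x t.castSucc) (x t.succ))
          * φ (Fin.last N) (x (Fin.last N)) := by
      intro x
      by_cases h : x 0 = i
      · rw [if_pos h, if_pos h, hfact x]; ring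
      · rw [if_neg h, if_neg h, zero_mul, zero_mul]
    simp_rw [e]
    rw [myPathSum n M N (fun k => if k = i then ν0 k / φ 0 k else 0)
      (fun j => φ (Fin.last N) j)]
    rw [Finset.sum_eq_single i]
    · calc ∑ l, (if i = i then ν0 i / φ 0 i else 0) * (M ^ N) i l * φ (Fin.last N) l
          = ∑ l, ν0 i / φ 0 i * ((M ^ N) i l * φ (Fin.last N) l) := by
            apply Finset.sum_congr rfl; intro l _; rw [if_pos rfl]; ring
        _ = ν0 i / φ 0 i * ∑ l, (M ^ N) i l * φ (Fin.last N) l := by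
            rw [Finset.mul_sum]
        _ = ν0 i := by rw [hchainF i, div_mul_cancel₀ _ (hφ0ne i)]
    · intro k _ hk
      apply Finset.sum_eq_zero
      intro j _
      rw [if_neg hk, zero_mul, zero_mul]
    · intro h; exact absurd (Finset.mem_univ i) h
  have hPmN : ∀ j, (∑ x, if x (Fin.last N) = j then P x else 0) = νN j := by
    intro j
    have e : ∀ x : Fin (N + 1) → Fin n, (if x (Fin.last N) = j then P x else 0)
        = (ν0 (x 0) / φ 0 (x 0))
          * (∏ t : Fin N, M (x t.castSucc) (x t.succ))
          * (if x (Fin.last N) = j then φ (Fin.last N) (x (Fin.last N)) else 0) := by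
      intro x
      by_cases h : x (Fin.last N) = j
      · rw [if_pos h, if_pos h, hfact x]; ring
      · rw [if_neg h, if_neg h, mul_zero]
    simp_rw [e]
    rw [myPathSum n M N (fun k => ν0 k / φ 0 k)
      (fun l => if l = j then φ (Fin.last N) l else 0)]
    have e2 : ∀ k, ∑ l, ν0 k / φ 0 k * (M ^ N) k l * (if l = j then φ (Fin.last N) l else 0)
        = (M ^ N) k j * φh 0 k * φ (Fin.last N) j := by
      intro k
      rw [Finset.sum_eq_single j]
      · rw [if_pos rfl, hφh0eq k]; ring
      · intro l _ hl; rw [if_neg hl, mul_zero]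
      · intro h; exact absurd (Finset.mem_univ j) h
    simp_rw [e2]
    have : ∑ k, (M ^ N) k j * φh 0 k * φ (Fin.last N) j
        = (∑ k, (M ^ N) k j * φh 0 k) * φ (Fin.last N) j := by
      rw [Finset.sum_mul]
    rw [this, hchainB j, mul_comm, hbcN]
  -- positivity and normalization of P
  have hP0 : ∀ x, 0 ≤ P x := by
    intro x
    rw [hfact x]
    exact mul_nonneg (div_nonneg (hν00 _) (le_of_lt (hφpos _ _)))
      (mul_nonneg (hPr0 x) (le_of_lt (hφpos _ _)))
  have hP1 : ∑ x, P x = 1 := by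
    have e : ∀ x : Fin (N + 1) → Fin n, P x = ∑ i, if x 0 = i then P x else 0 := by
      intro x
      rw [Finset.sum_ite_eq Finset.univ (x 0) (fun _ => P x)]
      simp
    calc ∑ x, P x = ∑ x : Fin (N + 1) → Fin n, ∑ i, if x 0 = i then P x else 0 :=
          Finset.sum_congr rfl (fun x _ => e x)
      _ = ∑ i, ∑ x : Fin (N + 1) → Fin n, if x 0 = i then P x else 0 := Finset.sum_comm
      _ = ∑ i, ν0 i := Finset.sum_congr rfl (fun i _ => hPm0 i)
      _ = 1 := hν01
  -- support facts
  have hQpos : ∀ x, Q x ≠ 0 → 0 < Q x := fun x h => lt_of_le_of_ne (hQ0 x) (Ne.symm h)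
  have hν0pos : ∀ x : Fin (N + 1) → Fin n, Q x ≠ 0 → 0 < ν0 (x 0) := by
    intro x h
    have h1 : Q x ≤ ∑ y : Fin (N + 1) → Fin n, if y 0 = x 0 then Q y else 0 := by
      have hle := Finset.single_le_sum
        (f := fun y : Fin (N + 1) → Fin n => if y 0 = x 0 then Q y else 0)
        (fun y _ => by
          split
          · exact hQ0 y
          · exact le_rfl)
        (Finset.mem_univ x)
      simpa using hle
    rw [hQm0 (x 0)] at h1
    exact lt_of_lt_of_le (hQpos x h) h1
  have hPrpos : ∀ x, Q x ≠ 0 → 0 < ∏ t : Fin N, M (x t.castSucc) (x t.succ) := by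
    intro x h
    have hm := hQsupp x h
    rw [hmx x] at hm
    have hne : (∏ t : Fin N, M (x t.castSucc) (x t.succ)) ≠ 0 := by
      intro h0; exact hm (by rw [h0, mul_zero])
    exact lt_of_le_of_ne (hPr0 x) (Ne.symm hne)
  have hmpos : ∀ x, Q x ≠ 0 → 0 < m x := by
    intro x h
    rw [hmx x]; exact mul_pos (hμ0 _) (hPrpos x h)
  have hPpos : ∀ x, Q x ≠ 0 → 0 < P x := by
    intro x h
    rw [hfact x]
    exact mul_pos (div_pos (hν0pos x h) (hφpos _ _)) (mul_pos (hPrpos x h) (hφpos _ _))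
  -- log decomposition
  set f : Fin n → ℝ := fun i => Real.log (ν0 i / (μ0 i * φ 0 i)) with hfdef
  set g : Fin n → ℝ := fun j => Real.log (φ (Fin.last N) j) with hgdef
  have hlog : ∀ x : Fin (N + 1) → Fin n, 0 < ν0 (x 0) →
      0 < ∏ t : Fin N, M (x t.castSucc) (x t.succ) →
      Real.log (P x / m x) = f (x 0) + g (x (Fin.last N)) := by
    intro x h1 h2
    have hr : P x / m x
        = (ν0 (x 0) / (μ0 (x 0) * φ 0 (x 0))) * φ (Fin.last N) (x (Fin.last N)) := by
      have h2' : (∏ t : Fin N, M (x t.castSucc) (x t.succ)) ≠ 0 := ne_of_gt h2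
      have h3' : μ0 (x 0) ≠ 0 := ne_of_gt (hμ0 (x 0))
      have h4' : φ 0 (x 0) ≠ 0 := hφ0ne (x 0)
      rw [hfact x, hmx x]
      field_simp
    rw [hr, Real.log_mul (ne_of_gt (div_pos h1 (mul_pos (hμ0 _) (hφpos _ _))))
      (ne_of_gt (hφpos _ _))]
  have hPne : ∀ x : Fin (N + 1) → Fin n, P x ≠ 0 →
      0 < ν0 (x 0) ∧ 0 < ∏ t : Fin N, M (x t.castSucc) (x t.succ) := by
    intro x h
    rw [hfact x] at h
    have h1 := (mul_ne_zero_iff.mp h).1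
    have h2 := (mul_ne_zero_iff.mp (mul_ne_zero_iff.mp h).2).1
    have h4 : ν0 (x 0) ≠ 0 := by
      intro h0; apply h1; rw [h0]; simp
    exact ⟨lt_of_le_of_ne (hν00 _) (Ne.symm h4), lt_of_le_of_ne (hPr0 x) (Ne.symm h2)⟩
  -- common value of the cross term
  have hfg : ∀ (R : (Fin (N + 1) → Fin n) → ℝ),
      (∀ i, (∑ x, if x 0 = i then R x else 0) = ν0 i) →
      (∀ j, (∑ x, if x (Fin.last N) = j then R x else 0) = νN j) →
      ∑ x, R x * (f (x 0) + g (x (Fin.last N)))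
        = ∑ i, ν0 i * f i + ∑ j, νN j * g j := by
    intro R h0 hNm
    have e : ∀ x : Fin (N + 1) → Fin n, R x * (f (x 0) + g (x (Fin.last N)))
        = R x * f (x 0) + R x * g (x (Fin.last N)) := fun x => mul_add _ _ _
    rw [Finset.sum_congr rfl (fun x _ => e x), Finset.sum_add_distrib]
    congr 1
    · rw [myFiberSum R (fun x => x 0) f]
      exact Finset.sum_congr rfl (fun i _ => by rw [h0 i])
    · rw [myFiberSum R (fun x => x (Fin.last N)) g]
      exact Finset.sum_congr rfl (fun j _ => by rw [hNm j])
  have hPrelEnt : relEnt P m = ∑ i, ν0 i * f i + ∑ j, νN j * g j := by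
    show ∑ x, P x * Real.log (P x / m x) = _
    have e : ∀ x, P x * Real.log (P x / m x) = P x * (f (x 0) + g (x (Fin.last N))) := by
      intro x
      by_cases h : P x = 0
      · rw [h, zero_mul, zero_mul]
      · obtain ⟨h1, h2⟩ := hPne x h
        rw [hlog x h1 h2]
    rw [Finset.sum_congr rfl (fun x _ => e x)]
    exact hfg P hPm0 hPmN
  have hT : ∑ x, Q x * Real.log (P x / m x) = relEnt P m := by
    have e : ∀ x, Q x * Real.log (P x / m x) = Q x * (f (x 0) + g (x (Fin.last N))) := by
      intro x
      by_cases h : Q x = 0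
      · rw [h, zero_mul, zero_mul]
      · rw [hlog x (hν0pos x h) (hPrpos x h)]
    rw [Finset.sum_congr rfl (fun x _ => e x), hfg Q hQm0 hQmN, hPrelEnt]
  -- Pythagorean identity
  have hpyth : relEnt Q m = relEnt Q P + relEnt P m := by
    rw [← hT]
    show ∑ x, Q x * Real.log (Q x / m x)
        = (∑ x, Q x * Real.log (Q x / P x)) + ∑ x, Q x * Real.log (P x / m x)
    rw [← Finset.sum_add_distrib]
    apply Finset.sum_congr rfl
    intro x _
    by_cases h : Q x = 0
    · rw [h]; ring
    · have hQx := hQpos x h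
      have hPx := hPpos x h
      have hmxp := hmpos x h
      have e : Q x / P x * (P x / m x) = Q x / m x := by
        rw [div_mul_div_comm, mul_comm (Q x) (P x), mul_div_mul_left _ _ (ne_of_gt hPx)]
      rw [← mul_add, ← Real.log_mul (ne_of_gt (div_pos hQx hPx))
        (ne_of_gt (div_pos hPx hmxp)), e]
  -- Gibbs inequality
  have key_ineq : ∀ x : Fin (N + 1) → Fin n, Q x - P x ≤ Q x * Real.log (Q x / P x) := by
    intro x
    by_cases h : Q x = 0
    · rw [h, zero_mul]; linarith [hP0 x]
    · have hQx := hQpos x h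
      have hPx := hPpos x h
      have hld : Real.log (Q x / P x) = - Real.log (P x / Q x) := by
        rw [← Real.log_inv, inv_div]
      have hle := Real.log_le_sub_one_of_pos (div_pos hPx hQx)
      have hmul := mul_le_mul_of_nonneg_left hle (le_of_lt hQx)
      have hc : Q x * (P x / Q x) = P x := by field_simp
      rw [hld]
      nlinarith [hmul, hc]
  have hsum0 : ∑ x, (Q x - P x) = 0 := by
    rw [Finset.sum_sub_distrib, hQ1, hP1, sub_self]
  have hQP0 : 0 ≤ relEnt Q P := by
    show 0 ≤ ∑ x, Q x * Real.log (Q x / P x)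
    calc (0 : ℝ) = ∑ x, (Q x - P x) := hsum0.symm
      _ ≤ ∑ x, Q x * Real.log (Q x / P x) := Finset.sum_le_sum (fun x _ => key_ineq x)
  refine ⟨hpyth, by linarith, ?_⟩
  intro heq
  have hQPzero : relEnt Q P = 0 := by linarith
  have hsum_eq : ∑ x, (Q x * Real.log (Q x / P x) - (Q x - P x)) = 0 := by
    rw [Finset.sum_sub_distrib, hsum0, sub_zero]
    exact hQPzero
  have hterm := (Finset.sum_eq_zero_iff_of_nonneg
    (fun x _ => sub_nonneg.mpr (key_ineq x))).mp hsum_eq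
  funext x
  have hx := hterm x (Finset.mem_univ x)
  by_cases h : Q x = 0
  · rw [h] at hx
    simp at hx
    rw [h, hx]
  · have hQx := hQpos x h
    have hPx := hPpos x h
    by_contra hne
    have hne' : P x / Q x ≠ 1 := by
      intro h'
      exact hne (((div_eq_one_iff_eq (ne_of_gt hQx)).mp h').symm)
    have hlt := Real.log_lt_sub_one_of_pos (div_pos hPx hQx) hne'
    have hld : Real.log (Q x / P x) = - Real.log (P x / Q x) := by
      rw [← Real.log_inv, inv_div]
    have hc : Q x * (P x / Q x) = P x := by field_simp
    have hmul := (mul_lt_mul_iff_right₀ hQx).mpr hlt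
    rw [hld] at hx
    nlinarith [hmul, hc]
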